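/- Every weakly connected component of a homomorphism homogeneous oriented graph is itself homomorphism homogeneous (as an induced subgraph). -/

import Mathlib

def IsOriented {V : Type*} (E : V → V → Prop) : Prop := ∀ x y, E x y → ¬ E y x

def IsLocHom {V : Type*} (E : V → V → Prop) (A : Finset V) (f : V → V) : Prop :=
  ∀ x ∈ A, ∀ y ∈ A, E x y → E (f x) (f y)

def IsHH {V : Type*} (E : V → V → Prop) : Prop :=
  ∀ (A : Finset V) (f : V → V), IsLocHom E A f →
    ∃ g : V → V, (∀ x y, E x y → E (g x) (g y)) ∧ ∀ x ∈ A, g x = f x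

theorem components_HH {V : Type*} (E : V → V → Prop)
    (hor : IsOriented E) (hhh : IsHH E) :
    ∀ v : V,
      IsHH (fun a b : {y : V // Relation.ReflTransGen (fun s t => E s t ∨ E t s) v y} =>
        E a.1 b.1) := by
  classical
  intro v A f hf
  let rel : V → V → Prop := fun s t => E s t ∨ E t s
  let C := {y : V // Relation.ReflTransGen rel v y}
  have hrelsymm : Symmetric rel := fun s t h => h.symm
  have hsymm : Symmetric (Relation.ReflTransGen rel) :=
    by haveI : Std.Symm rel := ⟨hrelsymm⟩; exact fun x y h => Std.Symm.symm x y h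
  by_cases hA : A = ∅
  · exact ⟨id, fun x y h => h, by simp [hA]⟩
  · obtain ⟨a, ha⟩ := Finset.nonempty_iff_ne_empty.2 hA
    -- lift A and f to V
    set A' : Finset V := A.image Subtype.val with hA'
    have hfind : ∀ x : V, x ∈ A' → ∃ p : C, p ∈ A ∧ p.1 = x := by
      intro x hx
      obtain ⟨p, hp, hpx⟩ := Finset.mem_image.1 hx
      exact ⟨p, hp, hpx⟩
    set f' : V → V := fun x =>
      if h : ∃ p : C, p ∈ A ∧ p.1 = x then (f (h.choose)).1 else x with hf'
    have hf'eq : ∀ p : C, p ∈ A → f' p.1 = (f p).1 := by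
      intro p hp
      have h : ∃ q : C, q ∈ A ∧ q.1 = p.1 := ⟨p, hp, rfl⟩
      have : h.choose = p := Subtype.ext h.choose_spec.2
      simp [f', dif_pos h, this]
    have hloc : IsLocHom E A' f' := by
      intro x hx y hy hxy
      obtain ⟨p, hp, hpx⟩ := hfind x hx
      obtain ⟨q, hq, hqy⟩ := hfind y hy
      subst hpx; subst hqy
      rw [hf'eq p hp, hf'eq q hq]
      exact hf p hp q hq hxy
    obtain ⟨g, hg, hgA⟩ := hhh A' f' hloc
    have hga : g a.1 = (f a).1 := by
      rw [hgA a.1 (Finset.mem_image.2 ⟨a, ha, rfl⟩), hf'eq a ha]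
    -- g maps C into C
    have hmem : ∀ p : C, Relation.ReflTransGen rel v (g p.1) := by
      intro p
      have h1 : Relation.ReflTransGen rel (g a.1) (g p.1) := by
        have := hsymm a.2 |>.trans p.2
        exact Relation.ReflTransGen.lift (r := rel) (p := rel) g
          (fun x y (h : rel x y) => h.elim (fun h => Or.inl (hg _ _ h))
            (fun h => Or.inr (hg _ _ h))) _ _ this
      have h2 : Relation.ReflTransGen rel v (g a.1) := by
        rw [hga]; exact (f a).2
      exact h2.trans h1
    refine ⟨fun p => ⟨g p.1, hmem p⟩, fun x y h => hg _ _ h, ?_⟩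
    intro p hp
    apply Subtype.ext
    show g p.1 = (f p).1
    rw [hgA p.1 (Finset.mem_image.2 ⟨p, hp, rfl⟩), hf'eq p hp]
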